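/- Let G be an amply regular graph with parameters (n, d, α, β) with α ≥ 1 and α = β − 1. For any edge xy, construct the bipartite graph H with parts S = N_x ∪ Δ_{xy} and T = N_y ∪ Δ'_{xy} (where Δ'_{xy} is a disjoint copy {z'₁,…,z'_α} of Δ_{xy} = {z₁,…,z_α}), and edges: edges of G between N_x and N_y; an edge v z'_i whenever v ∈ N_x and v z_i ∈ E; an edge z_i w whenever w ∈ N_y and z_i w ∈ E; an edge z_i z'_i for each i; and an edge z_i z'_j whenever i ≠ j and z_i z_j ∈ E. Then for every A ⊆ S, the neighborhood of A in T has cardinality at least |A|, and hence H has a perfect matching. -/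

import Mathlib

open Finset SimpleGraph

variable {V : Type*} [Fintype V] [DecidableEq V]

/-- A graph is amply regular with parameters `(n, d, a, b)` if it is `d`-regular on `n`
vertices, adjacent vertices have exactly `a` common neighbors, and vertices at distance 2
have exactly `b` common neighbors. -/
def SimpleGraph.IsAmplyRegular (G : SimpleGraph V) [DecidableRel G.Adj]
    (n d a b : ℕ) : Prop :=
  Fintype.card V = n ∧ G.IsRegularOfDegree d ∧
    (∀ x y, G.Adj x y → (G.neighborFinset x ∩ G.neighborFinset y).card = a) ∧
    (∀ x y, G.dist x y = 2 → (G.neighborFinset x ∩ G.neighborFinset y).card = b)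

/-- The measure `μ_x^p` giving mass `p` to `x` and `(1-p)/deg x` to each neighbor of `x`. -/
noncomputable def muMeasure (G : SimpleGraph V) [DecidableRel G.Adj] (p : ℝ) (x : V) :
    V → ℝ :=
  fun v => if v = x then p else if G.Adj x v then (1 - p) / (G.degree x : ℝ) else 0

/-- `pi` is a transport plan between `mu1` and `mu2`. -/
def IsTransportPlan (mu1 mu2 : V → ℝ) (pi : V → V → ℝ) : Prop :=
  (∀ u v, 0 ≤ pi u v) ∧ (∀ u, ∑ v, pi u v = mu1 u) ∧ (∀ v, ∑ u, pi u v = mu2 v)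

/-- The 1-Wasserstein distance between two measures w.r.t. the graph distance. -/
noncomputable def W1 (G : SimpleGraph V) (mu1 mu2 : V → ℝ) : ℝ :=
  sInf {c : ℝ | ∃ pi, IsTransportPlan mu1 mu2 pi ∧
    c = ∑ u, ∑ v, (G.dist u v : ℝ) * pi u v}

/-- The Lin-Lu-Yau curvature of an edge of a `d`-regular graph, via the idleness
`p = 1/(d+1)` formula of Bourne et al. -/
noncomputable def kappaLLY (G : SimpleGraph V) [DecidableRel G.Adj] (d : ℕ) (x y : V) :
    ℝ :=
  ((d + 1 : ℝ) / d) *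
    (1 - W1 G (muMeasure G (1 / (d + 1 : ℝ)) x) (muMeasure G (1 / (d + 1 : ℝ)) y))

/-- `N_x = Γ(x) \ ({y} ∪ Γ(y))`. -/
def Nset (G : SimpleGraph V) [DecidableRel G.Adj] (x y : V) : Finset V :=
  G.neighborFinset x \ insert y (G.neighborFinset y)

/-- `Δ_{xy} = Γ(x) ∩ Γ(y)`. -/
def Dset (G : SimpleGraph V) [DecidableRel G.Adj] (x y : V) : Finset V :=
  G.neighborFinset x ∩ G.neighborFinset y

/-- The auxiliary bipartite relation `H` between `N_x ∪ Δ_{xy}` and `N_y ∪ Δ'_{xy}`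
(the second `Δ` copy is disjoint from `N_y`, so we model `Δ'_{xy}` by `Δ_{xy}` itself):
edges of `G` between `N_x` and `N_y`; `v z'_i` for `v ∈ N_x` adjacent to `z_i`;
`z_i w` for `w ∈ N_y` adjacent to `z_i`; `z_i z'_i`; and `z_i z'_j` for `i ≠ j` with
`z_i z_j ∈ E`. -/
def Hrel (G : SimpleGraph V) [DecidableRel G.Adj] (x y : V) (u w : V) : Prop :=
  (u ∈ Nset G x y ∧ w ∈ Nset G y x ∧ G.Adj u w) ∨
  (u ∈ Nset G x y ∧ w ∈ Dset G x y ∧ G.Adj u w) ∨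
  (u ∈ Dset G x y ∧ w ∈ Nset G y x ∧ G.Adj u w) ∨
  (u ∈ Dset G x y ∧ w ∈ Dset G x y ∧ (u = w ∨ G.Adj u w))

instance (G : SimpleGraph V) [DecidableRel G.Adj] (x y u w : V) :
    Decidable (Hrel G x y u w) := by
  unfold Hrel; infer_instance

lemma Dset_comm (G : SimpleGraph V) [DecidableRel G.Adj] (x y : V) :
    Dset G x y = Dset G y x := Finset.inter_comm _ _

lemma union_eq (G : SimpleGraph V) [DecidableRel G.Adj] {x y : V} (hxy : G.Adj x y) :
    Nset G x y ∪ Dset G x y = (G.neighborFinset x).erase y := by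
  ext w
  simp only [Nset, Dset, mem_union, mem_sdiff, mem_insert, mem_inter,
    mem_neighborFinset, mem_erase]
  have h1 : ¬ G.Adj y y := G.irrefl
  have h2 : G.Adj y w → w ≠ y := fun h => (G.ne_of_adj h).symm
  tauto

lemma dist2 (G : SimpleGraph V) {v x y : V} (h1 : G.Adj v x) (h2 : G.Adj x y)
    (h3 : ¬ G.Adj v y) (h4 : v ≠ y) : G.dist v y = 2 := by
  have hle : G.dist v y ≤ 2 := by
    simpa [SimpleGraph.Walk.length_cons] using SimpleGraph.dist_le (Walk.cons h1 h2.toWalk)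
  have hr : G.Reachable v y := ⟨Walk.cons h1 h2.toWalk⟩
  have h0 : G.dist v y ≠ 0 := fun h0' => h4 (hr.dist_eq_zero_iff.mp h0')
  have h1' : G.dist v y ≠ 1 := fun h1'' => h3 (SimpleGraph.dist_eq_one_iff_adj.mp h1'')
  omega

lemma mem_Nset (G : SimpleGraph V) [DecidableRel G.Adj] {x y v : V} :
    v ∈ Nset G x y ↔ G.Adj x v ∧ v ≠ y ∧ ¬ G.Adj y v := by
  simp only [Nset, mem_sdiff, mem_insert, mem_neighborFinset]
  tauto

lemma mem_Dset (G : SimpleGraph V) [DecidableRel G.Adj] {x y v : V} :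
    v ∈ Dset G x y ↔ G.Adj x v ∧ G.Adj y v := by
  simp [Dset, mem_neighborFinset]

lemma Hrel_symm_mp (G : SimpleGraph V) [DecidableRel G.Adj] {x y u w : V}
    (h : Hrel G x y u w) : Hrel G y x w u := by
  unfold Hrel at h ⊢
  rw [Dset_comm G y x]
  rcases h with ⟨h1,h2,h3⟩|⟨h1,h2,h3⟩|⟨h1,h2,h3⟩|⟨h1,h2,h3⟩
  · exact Or.inl ⟨h2, h1, h3.symm⟩
  · exact Or.inr (Or.inr (Or.inl ⟨h2, h1, h3.symm⟩))
  · exact Or.inr (Or.inl ⟨h2, h1, h3.symm⟩)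
  · refine Or.inr (Or.inr (Or.inr ⟨h2, h1, ?_⟩))
    rcases h3 with h3 | h3
    · exact Or.inl h3.symm
    · exact Or.inr h3.symm

lemma deg_left (G : SimpleGraph V) [DecidableRel G.Adj] {n d a b : ℕ}
    (h : G.IsAmplyRegular n d a b) (ha : 1 ≤ a) (hab : a = b - 1)
    {x y : V} (hxy : G.Adj x y) :
    ∀ v ∈ Nset G x y ∪ Dset G x y,
      ((Nset G y x ∪ Dset G x y).filter (Hrel G x y v)).card = a := by
  obtain ⟨-, hd, hA, hB⟩ := h
  have hb : b = a + 1 := by omega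
  have ht : Nset G y x ∪ Dset G x y = (G.neighborFinset y).erase x := by
    rw [Dset_comm]; exact union_eq G (G.adj_symm hxy)
  intro v hv
  rw [mem_union] at hv
  rcases hv with hv | hv
  · obtain ⟨hxv, hvy, hyv⟩ := (mem_Nset G).mp hv
    have hvnD : v ∉ Dset G x y := fun hD => hyv ((mem_Dset G).mp hD).2
    have hset : (Nset G y x ∪ Dset G x y).filter (Hrel G x y v)
        = (G.neighborFinset v ∩ G.neighborFinset y).erase x := by
      ext w
      simp only [mem_filter, ht, mem_erase, mem_inter, mem_neighborFinset]
      constructor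
      · rintro ⟨⟨hwx, hyw⟩, hrel⟩
        refine ⟨hwx, ?_, hyw⟩
        rcases hrel with ⟨_,_,hadj⟩|⟨_,_,hadj⟩|⟨hD,_⟩|⟨hD,_⟩
        · exact hadj
        · exact hadj
        · exact absurd hD hvnD
        · exact absurd hD hvnD
      · rintro ⟨hwx, hvw, hyw⟩
        refine ⟨⟨hwx, hyw⟩, ?_⟩
        by_cases hxw : G.Adj x w
        · exact Or.inr (Or.inl ⟨hv, (mem_Dset G).mpr ⟨hxw, hyw⟩, hvw⟩)
        · exact Or.inl ⟨hv, (mem_Nset G).mpr ⟨hyw, hwx, hxw⟩, hvw⟩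
    have hdist : G.dist v y = 2 :=
      dist2 G (G.adj_symm hxv) hxy (fun hc => hyv (G.adj_symm hc)) hvy
    have hx : x ∈ G.neighborFinset v ∩ G.neighborFinset y := by
      simp only [mem_inter, mem_neighborFinset]
      exact ⟨G.adj_symm hxv, G.adj_symm hxy⟩
    rw [hset, card_erase_of_mem hx, hB v y hdist]
    omega
  · obtain ⟨hxv, hyv⟩ := (mem_Dset G).mp hv
    have hvnN : v ∉ Nset G x y := fun hN => ((mem_Nset G).mp hN).2.2 hyv
    have hset : (Nset G y x ∪ Dset G x y).filter (Hrel G x y v)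
        = insert v ((G.neighborFinset v ∩ G.neighborFinset y).erase x) := by
      ext w
      simp only [mem_filter, ht, mem_erase, mem_inter, mem_neighborFinset, mem_insert]
      constructor
      · rintro ⟨⟨hwx, hyw⟩, hrel⟩
        rcases hrel with ⟨hN,_,_⟩|⟨hN,_,_⟩|⟨_,_,hadj⟩|⟨_,_,heq | hadj⟩
        · exact absurd hN hvnN
        · exact absurd hN hvnN
        · exact Or.inr ⟨hwx, hadj, hyw⟩
        · exact Or.inl heq.symm
        · exact Or.inr ⟨hwx, hadj, hyw⟩
      · rintro (rfl | ⟨hwx, hvw, hyw⟩)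
        · exact ⟨⟨G.ne_of_adj (G.adj_symm hxv), hyv⟩,
            Or.inr (Or.inr (Or.inr ⟨hv, hv, Or.inl rfl⟩))⟩
        · refine ⟨⟨hwx, hyw⟩, ?_⟩
          by_cases hxw : G.Adj x w
          · exact Or.inr (Or.inr (Or.inr ⟨hv, (mem_Dset G).mpr ⟨hxw, hyw⟩, Or.inr hvw⟩))
          · exact Or.inr (Or.inr (Or.inl ⟨hv, (mem_Nset G).mpr ⟨hyw, hwx, hxw⟩, hvw⟩))
    have hx : x ∈ G.neighborFinset v ∩ G.neighborFinset y := by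
      simp only [mem_inter, mem_neighborFinset]
      exact ⟨G.adj_symm hxv, G.adj_symm hxy⟩
    have hvni : v ∉ (G.neighborFinset v ∩ G.neighborFinset y).erase x := by
      simp [mem_erase, mem_inter, mem_neighborFinset]
    rw [hset, card_insert_of_notMem hvni, card_erase_of_mem hx, hA v y (G.adj_symm hyv)]
    omega

lemma deg_right (G : SimpleGraph V) [DecidableRel G.Adj] {n d a b : ℕ}
    (h : G.IsAmplyRegular n d a b) (ha : 1 ≤ a) (hab : a = b - 1)
    {x y : V} (hxy : G.Adj x y) :
    ∀ w ∈ Nset G y x ∪ Dset G x y,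
      ((Nset G x y ∪ Dset G x y).filter (fun v => Hrel G x y v w)).card = a := by
  intro w hw
  have hw' : w ∈ Nset G y x ∪ Dset G y x := by rwa [Dset_comm G x y] at hw
  have h1 := deg_left G h ha hab (G.adj_symm hxy) w hw'
  rw [← h1]
  congr 1
  rw [Dset_comm G y x]
  exact filter_congr (fun v _ => ⟨fun hh => Hrel_symm_mp G hh, fun hh => Hrel_symm_mp G hh⟩)

lemma hall_ineq (G : SimpleGraph V) [DecidableRel G.Adj] {n d a b : ℕ}
    (h : G.IsAmplyRegular n d a b) (ha : 1 ≤ a) (hab : a = b - 1)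
    {x y : V} (hxy : G.Adj x y) :
    ∀ A ⊆ Nset G x y ∪ Dset G x y,
      A.card ≤ ((Nset G y x ∪ Dset G x y).filter (fun w => ∃ v ∈ A, Hrel G x y v w)).card := by
  intro A hA
  set s := Nset G x y ∪ Dset G x y with hs
  set t := Nset G y x ∪ Dset G x y with htdef
  set B := t.filter (fun w => ∃ v ∈ A, Hrel G x y v w) with hB
  have key : a * A.card ≤ a * B.card := by
    have e1 : ∀ v ∈ A, (t.filter (Hrel G x y v)).card = (B.filter (Hrel G x y v)).card := by
      intro v hv
      congr 1
      ext w
      simp only [hB, mem_filter]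
      constructor
      · rintro ⟨hwt, hrel⟩
        exact ⟨⟨hwt, v, hv, hrel⟩, hrel⟩
      · rintro ⟨⟨hwt, -⟩, hrel⟩
        exact ⟨hwt, hrel⟩
    calc a * A.card = ∑ v ∈ A, a := by rw [Finset.sum_const, smul_eq_mul, mul_comm]
      _ = ∑ v ∈ A, (t.filter (Hrel G x y v)).card := by
          refine Finset.sum_congr rfl (fun v hv => ?_)
          exact (deg_left G h ha hab hxy v (hA hv)).symm
      _ = ∑ v ∈ A, (B.filter (Hrel G x y v)).card := Finset.sum_congr rfl e1
      _ = ∑ v ∈ A, ∑ w ∈ B, if Hrel G x y v w then 1 else 0 := by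
          refine Finset.sum_congr rfl (fun v _ => ?_)
          rw [Finset.card_filter]
      _ = ∑ w ∈ B, ∑ v ∈ A, if Hrel G x y v w then 1 else 0 := Finset.sum_comm
      _ = ∑ w ∈ B, (A.filter (fun v => Hrel G x y v w)).card := by
          refine Finset.sum_congr rfl (fun w _ => ?_)
          rw [Finset.card_filter]
      _ ≤ ∑ w ∈ B, (s.filter (fun v => Hrel G x y v w)).card := by
          refine Finset.sum_le_sum (fun w _ => ?_)
          exact Finset.card_le_card (Finset.monotone_filter_left _ hA)
      _ = ∑ w ∈ B, a := by
          refine Finset.sum_congr rfl (fun w hw => ?_)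
          exact deg_right G h ha hab hxy w (Finset.filter_subset _ _ hw)
      _ = a * B.card := by rw [Finset.sum_const, smul_eq_mul, mul_comm]
  exact Nat.le_of_mul_le_mul_left key (by omega)

/-- In an amply regular graph with `α ≥ 1` and `α = β - 1`, for any edge `xy` the Hall
condition holds for the bipartite graph `H`, and hence `H` has a perfect matching. -/
theorem stmt8 (G : SimpleGraph V) [DecidableRel G.Adj] {n d a b : ℕ}
    (h : G.IsAmplyRegular n d a b) (ha : 1 ≤ a) (hab : a = b - 1)
    (x y : V) (hxy : G.Adj x y) :
    (∀ A ⊆ Nset G x y ∪ Dset G x y,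
      A.card ≤ ((Nset G y x ∪ Dset G x y).filter (fun w => ∃ v ∈ A, Hrel G x y v w)).card) ∧
    (∃ f : V → V, Set.BijOn f ↑(Nset G x y ∪ Dset G x y) ↑(Nset G y x ∪ Dset G x y) ∧
      ∀ v ∈ Nset G x y ∪ Dset G x y, Hrel G x y v (f v)) := by
  have hd := h.2.1
  set s := Nset G x y ∪ Dset G x y with hs
  set t := Nset G y x ∪ Dset G x y with htdef
  refine ⟨hall_ineq G h ha hab hxy, ?_⟩
  -- cardinalities
  have hcs : s.card = d - 1 := by
    rw [hs, union_eq G hxy, card_erase_of_mem ((SimpleGraph.mem_neighborFinset G x y).mpr hxy)]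
    rw [SimpleGraph.card_neighborFinset_eq_degree, hd x]
  have hct : t.card = d - 1 := by
    rw [htdef, Dset_comm G x y, union_eq G (G.adj_symm hxy),
      card_erase_of_mem ((SimpleGraph.mem_neighborFinset G y x).mpr (G.adj_symm hxy))]
    rw [SimpleGraph.card_neighborFinset_eq_degree, hd y]
  -- Hall's theorem
  set t' : {v // v ∈ s} → Finset V := fun v => t.filter (Hrel G x y ↑v) with ht'
  have hhall : ∀ s' : Finset {v // v ∈ s}, s'.card ≤ (s'.biUnion t').card := by
    intro s'
    have himg : s'.image Subtype.val ⊆ s := by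
      intro v hv
      obtain ⟨⟨v', hv'⟩, -, rfl⟩ := Finset.mem_image.mp hv
      exact hv'
    have h2 := hall_ineq G h ha hab hxy (s'.image Subtype.val) himg
    have h3 : s'.biUnion t'
        = t.filter (fun w => ∃ v ∈ s'.image Subtype.val, Hrel G x y v w) := by
      ext w
      simp only [ht', Finset.mem_biUnion, Finset.mem_filter, Finset.mem_image]
      constructor
      · rintro ⟨v, hv, hwt, hrel⟩
        exact ⟨hwt, ⟨v, ⟨v, hv, rfl⟩, hrel⟩⟩
      · rintro ⟨hwt, v, ⟨v', hv', rfl⟩, hrel⟩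
        exact ⟨v', hv', hwt, hrel⟩
    rw [h3, ← Finset.card_image_of_injective s' Subtype.val_injective]
    exact h2
  obtain ⟨f', hinj, hmem⟩ :=
    (Finset.all_card_le_biUnion_card_iff_exists_injective t').mp hhall
  classical
  refine ⟨fun v => if hv : v ∈ s then f' ⟨v, hv⟩ else v, ?_, ?_⟩
  · have hmapsTo : ∀ v (hv : v ∈ s), f' ⟨v, hv⟩ ∈ t := by
      intro v hv
      have := hmem ⟨v, hv⟩
      exact (Finset.mem_filter.mp this).1
    have hinjOn : Set.InjOn (fun v => if hv : v ∈ s then f' ⟨v, hv⟩ else v) ↑s := by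
      intro u hu v hv huv
      simp only [Finset.mem_coe] at hu hv
      simp only [dif_pos hu, dif_pos hv] at huv
      exact congrArg Subtype.val (hinj huv)
    have himage : s.image (fun v => if hv : v ∈ s then f' ⟨v, hv⟩ else v) = t := by
      apply Finset.eq_of_subset_of_card_le
      · intro w hw
        obtain ⟨v, hv, rfl⟩ := Finset.mem_image.mp hw
        simp only [dif_pos hv]
        exact hmapsTo v hv
      · rw [Finset.card_image_of_injOn hinjOn, hcs, hct]
    refine ⟨?_, hinjOn, ?_⟩
    · intro v hv
      simp only [Finset.mem_coe] at hv ⊢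
      simp only [dif_pos hv]
      exact hmapsTo v hv
    · intro w hw
      simp only [Finset.mem_coe] at hw
      rw [← himage] at hw
      obtain ⟨v, hv, rfl⟩ := Finset.mem_image.mp hw
      exact ⟨v, hv, rfl⟩
  · intro v hv
    simp only [dif_pos hv]
    exact (Finset.mem_filter.mp (hmem ⟨v, hv⟩)).2
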